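/- Let t and k be integers with 0 <= t <= min(r_n, s_n) and 1 <= k <= max(e,0), and suppose l = t p^n + k satisfies max(r+s-p^{n+1},0)+1 <= l <= min(r,s). Then: (1) the element z_l = (-1)^{R-k} sum_{i=0}^{t} (-1)^i v_{i p^n + R + 1 - k, (t-i) p^n + S} of M(r,s) satisfies T^{p^n - 1}(z_l) = x_{(t-1) p^n + R + S + 1 - k}; (2) the (t+1) x (t+1) matrix M(1) over F with (i,j) entry C(r_n+s_n-2t, r_n-t+j-i) is invertible, and with zeta = M(1)^{-1} X, where X is the column vector of length t+1 with i-th entry (-1)^{i-1}, the element y_l = (-1)^{R-k} sum_{i=0}^{t} zeta_{i+1} v_{(r_n-t+i) p^n + R + 1 - k, (s_n-i) p^n + S} satisfies T^{(r_n+s_n-2t) p^n}(y_l) = z_l. -/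

import Mathlib

open scoped BigOperators

noncomputable section

/-- The basis vector `v_{a,b}` of `M(r,s)` (1-indexed), read as `0` when
`a` or `b` is out of range. -/
def vv (F : Type*) [Field F] (r s : ℕ) (a b : ℤ) : Matrix (Fin r) (Fin s) F :=
  Matrix.of fun i j => if (i : ℤ) + 1 = a ∧ (j : ℤ) + 1 = b then 1 else 0

/-- The linear endomorphism `T` of `M(r,s)` with `T(v_{i,j}) = v_{i-1,j} + v_{i,j-1}`
(out-of-range symbols read as `0`); it models the action of `g - 1`. -/
def TT (F : Type*) [Field F] (r s : ℕ) :
    Matrix (Fin r) (Fin s) F →ₗ[F] Matrix (Fin r) (Fin s) F where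
  toFun A := Matrix.of fun i j =>
    (if h : (i : ℕ) + 1 < r then A ⟨(i : ℕ) + 1, h⟩ j else 0) +
    (if h : (j : ℕ) + 1 < s then A i ⟨(j : ℕ) + 1, h⟩ else 0)
  map_add' A B := by
    ext i j
    simp only [Matrix.of_apply, Matrix.add_apply]
    split_ifs <;> abel
  map_smul' c A := by
    ext i j
    simp only [Matrix.of_apply, Matrix.smul_apply, RingHom.id_apply, smul_eq_mul]
    split_ifs <;> ring

/-- `x_m = ∑_{j=1}^m (-1)^{j-1} v_{j, m+1-j}` (the empty sum if `m ≤ 0`). -/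
def xx (F : Type*) [Field F] (r s : ℕ) (m : ℤ) : Matrix (Fin r) (Fin s) F :=
  ∑ j ∈ Finset.range m.toNat, ((-1 : F) ^ j) • vv F r s ((j : ℤ) + 1) (m - j)

/-- The subspace `D_d` of `M(r,s)`, spanned by the `v_{i,j}` with `i + j = d + 1`. -/
def Dd (F : Type*) [Field F] (r s : ℕ) (d : ℕ) :
    Submodule F (Matrix (Fin r) (Fin s) F) :=
  Submodule.span F { A | ∃ a b : ℕ, 1 ≤ a ∧ a ≤ r ∧ 1 ≤ b ∧ b ≤ s ∧
    a + b = d + 1 ∧ A = vv F r s (a : ℤ) (b : ℤ) }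

/-- Binomial coefficient `C(a,b)` as an element of `F`, with the convention that
it is `0` when `b < 0` or `b > a`. -/
def binF (F : Type*) [Field F] (a b : ℤ) : F :=
  if 0 ≤ b ∧ b ≤ a then (Nat.choose a.toNat b.toNat : F) else 0

/-- `lam` (restricted to indices `1,…,min r s`) is the Jordan type of the nilpotent
operator `T` on `M(r,s)`: a nonincreasing list of `min r s` positive integers such that
for each `m ≥ 1` the number of parts `≥ m` is `rank T^{m-1} - rank T^m`. -/
def IsJordanType (F : Type*) [Field F] (r s : ℕ) (lam : ℕ → ℕ) : Prop :=
  (∀ l, 1 ≤ l → l ≤ min r s → 0 < lam l) ∧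
  (∀ l l', 1 ≤ l → l ≤ l' → l' ≤ min r s → lam l' ≤ lam l) ∧
  ∀ m, 1 ≤ m →
    ((Finset.Icc 1 (min r s)).filter fun l => m ≤ lam l).card =
      Module.finrank F ↥(LinearMap.range ((TT F r s) ^ (m - 1))) -
      Module.finrank F ↥(LinearMap.range ((TT F r s) ^ m))

namespace S15

variable (F : Type*) [Field F] (r s : ℕ)

/-- extension by zero, as a linear map into functions on ℕ × ℕ -/
def eE : Matrix (Fin r) (Fin s) F →ₗ[F] (ℕ → ℕ → F) where
  toFun A := fun x y => if h : x < r ∧ y < s then A ⟨x, h.1⟩ ⟨y, h.2⟩ else 0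
  map_add' A B := by
    funext x y
    by_cases h : x < r ∧ y < s <;> simp [h]
  map_smul' c A := by
    funext x y
    by_cases h : x < r ∧ y < s <;> simp [h]

lemma eE_apply_lt (A : Matrix (Fin r) (Fin s) F) (x y : ℕ) (hx : x < r) (hy : y < s) :
    eE F r s A x y = A ⟨x, hx⟩ ⟨y, hy⟩ := by
  simp [eE, hx, hy]

def sh1 : (ℕ → ℕ → F) →ₗ[F] (ℕ → ℕ → F) where
  toFun f := fun x y => f (x + 1) y
  map_add' f g := rfl
  map_smul' c f := rfl

def sh2 : (ℕ → ℕ → F) →ₗ[F] (ℕ → ℕ → F) where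
  toFun f := fun x y => f x (y + 1)
  map_add' f g := rfl
  map_smul' c f := rfl

lemma sh1_pow (u : ℕ) (f : ℕ → ℕ → F) (x y : ℕ) : ((sh1 F) ^ u) f x y = f (x + u) y := by
  induction u generalizing f x with
  | zero => rfl
  | succ n ih =>
      rw [pow_succ]
      show ((sh1 F) ^ n) (sh1 F f) x y = _
      rw [ih]
      show f (x + n + 1) y = f (x + (n + 1)) y
      rw [Nat.add_assoc]

lemma sh2_pow (u : ℕ) (f : ℕ → ℕ → F) (x y : ℕ) : ((sh2 F) ^ u) f x y = f x (y + u) := by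
  induction u generalizing f y with
  | zero => rfl
  | succ n ih =>
      rw [pow_succ]
      show ((sh2 F) ^ n) (sh2 F f) x y = _
      rw [ih]
      show f x (y + n + 1) = f x (y + (n + 1))
      rw [Nat.add_assoc]

lemma eE_TT (A : Matrix (Fin r) (Fin s) F) (x y : ℕ) :
    eE F r s (TT F r s A) x y = eE F r s A (x + 1) y + eE F r s A x (y + 1) := by
  by_cases h : x < r ∧ y < s
  · rw [eE_apply_lt F r s _ x y h.1 h.2]
    show (if h1 : x + 1 < r then A ⟨x+1, h1⟩ ⟨y, h.2⟩ else 0) +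
        (if h2 : y + 1 < s then A ⟨x, h.1⟩ ⟨y+1, h2⟩ else 0) = _
    congr 1
    · by_cases h1 : x + 1 < r
      · rw [dif_pos h1, eE_apply_lt F r s A _ _ h1 h.2]
      · rw [dif_neg h1]
        simp only [eE, LinearMap.coe_mk, AddHom.coe_mk]
        rw [dif_neg (by tauto)]
    · by_cases h2 : y + 1 < s
      · rw [dif_pos h2, eE_apply_lt F r s A _ _ h.1 h2]
      · rw [dif_neg h2]
        simp only [eE, LinearMap.coe_mk, AddHom.coe_mk]
        rw [dif_neg (by tauto)]
  · have : eE F r s (TT F r s A) x y = 0 := by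
      simp only [eE, LinearMap.coe_mk, AddHom.coe_mk]; rw [dif_neg h]
    rw [this]
    have h1 : eE F r s A (x+1) y = 0 := by
      simp only [eE, LinearMap.coe_mk, AddHom.coe_mk]; rw [dif_neg (by omega)]
    have h2 : eE F r s A x (y+1) = 0 := by
      simp only [eE, LinearMap.coe_mk, AddHom.coe_mk]; rw [dif_neg (by omega)]
    rw [h1, h2, add_zero]

lemma eE_TT_pow (N : ℕ) (A : Matrix (Fin r) (Fin s) F) (x y : ℕ) :
    eE F r s (((TT F r s) ^ N) A) x y
      = ∑ u ∈ Finset.range (N + 1), (N.choose u : F) * eE F r s A (x + u) (y + (N - u)) := by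
  have hcomm : Commute (sh1 F) (sh2 F) := by
    constructor
  have key : ∀ (B : Matrix (Fin r) (Fin s) F),
      eE F r s (((TT F r s) ^ N) B) = (((sh1 F + sh2 F)) ^ N) (eE F r s B) := by
    induction N with
    | zero => intro B; rfl
    | succ n ih =>
        intro B
        rw [pow_succ, pow_succ]
        show eE F r s (((TT F r s) ^ n) (TT F r s B))
            = ((sh1 F + sh2 F) ^ n) ((sh1 F + sh2 F) (eE F r s B))
        rw [ih (TT F r s B)]
        congr 1
        funext x y
        show eE F r s (TT F r s B) x y = (sh1 F + sh2 F) (eE F r s B) x y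
        rw [eE_TT]
        rfl
  rw [key A, Commute.add_pow hcomm]
  -- evaluate the sum of endomorphisms
  rw [LinearMap.sum_apply]
  simp only [Module.End.mul_apply]
  rw [Finset.sum_apply, Finset.sum_apply]
  apply Finset.sum_congr rfl
  intro u hu
  show ((sh1 F) ^ u * (sh2 F) ^ (N - u) * (N.choose u : Module.End F (ℕ → ℕ → F))) (eE F r s A) x y = _
  have hc : ((N.choose u : ℕ) : Module.End F (ℕ → ℕ → F)) (eE F r s A) = (N.choose u : ℕ) • (eE F r s A) :=
    Module.End.natCast_apply _ _
  rw [Module.End.mul_apply, Module.End.mul_apply, hc, map_nsmul, map_nsmul]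
  simp only [Pi.smul_apply]
  rw [sh1_pow, sh2_pow]
  simp [nsmul_eq_mul, mul_comm]

end S15

namespace S15
variable (F : Type*) [Field F] (r s : ℕ)

lemma eE_vv (a b : ℤ) (x y : ℕ) :
    eE F r s (vv F r s a b) x y =
      if ((x:ℤ) + 1 = a ∧ (y:ℤ) + 1 = b ∧ x < r ∧ y < s) then 1 else 0 := by
  by_cases h : x < r ∧ y < s
  · rw [eE_apply_lt F r s _ x y h.1 h.2]
    show (if (x:ℤ)+1 = a ∧ (y:ℤ)+1 = b then (1:F) else 0) = _
    by_cases h2 : (x:ℤ)+1 = a ∧ (y:ℤ)+1 = b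
    · rw [if_pos h2, if_pos ⟨h2.1, h2.2, h.1, h.2⟩]
    · rw [if_neg h2, if_neg (by tauto)]
  · simp only [eE, LinearMap.coe_mk, AddHom.coe_mk]
    rw [dif_neg h, if_neg (by tauto)]

lemma eE_TT_pow_vv (a b : ℤ) (ha : a ≤ r) (hb : b ≤ s) (N x y : ℕ)
    (hx : x < r) (hy : y < s) :
    eE F r s (((TT F r s) ^ N) (vv F r s a b)) x y =
      if ((x:ℤ) + 1 ≤ a ∧ (y:ℤ) + 1 ≤ b ∧ (x:ℤ) + y + N + 2 = a + b)
      then (Nat.choose N (a - 1 - x).toNat : F) else 0 := by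
  rw [eE_TT_pow]
  have hterm : ∀ u : ℕ, (N.choose u : F) * eE F r s (vv F r s a b) (x + u) (y + (N - u))
      = (N.choose u : F) * (if ((x:ℤ) + u + 1 = a ∧ (y:ℤ) + (N - u : ℕ) + 1 = b ∧
          x + u < r ∧ y + (N - u) < s) then 1 else 0) := by
    intro u
    rw [eE_vv]
    push_cast
    ring_nf
  by_cases P : ((x:ℤ) + 1 ≤ a ∧ (y:ℤ) + 1 ≤ b ∧ (x:ℤ) + y + N + 2 = a + b)
  · rw [if_pos P]
    obtain ⟨P1, P2, P3⟩ := P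
    set u0 : ℕ := (a - 1 - x).toNat with hu0
    have hu0' : (u0 : ℤ) = a - 1 - x := Int.toNat_of_nonneg (by omega)
    have hu0N : u0 ≤ N := by omega
    rw [Finset.sum_eq_single u0]
    · rw [hterm u0, if_pos, mul_one]
      have hNu : ((N - u0 : ℕ) : ℤ) = (N : ℤ) - u0 := by
        omega
      refine ⟨by omega, by rw [hNu]; omega, by omega, by omega⟩
    · intro u hu hne
      rw [hterm u, if_neg, mul_zero]
      rintro ⟨c1, -, -⟩
      exact hne (by omega)
    · intro hu
      exact absurd (Finset.mem_range.mpr (by omega)) hu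
  · rw [if_neg P]
    apply Finset.sum_eq_zero
    intro u hu
    rw [hterm u, if_neg, mul_zero]
    rintro ⟨c1, c2, c3, c4⟩
    have hu' : u ≤ N := by
      have := Finset.mem_range.mp hu; omega
    have hNu : ((N - u : ℕ) : ℤ) = (N : ℤ) - u := by omega
    rw [hNu] at c2
    exact P ⟨by omega, by omega, by omega⟩

end S15

namespace S15

lemma choose_pow_sub_one (p : ℕ) (hp : p.Prime) (F : Type*) [Field F] [CharP F p]
    (n u : ℕ) (hu : u < p ^ n) : (((p ^ n - 1).choose u : F)) = (-1) ^ u := by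
  have hpn : 1 ≤ p ^ n := Nat.one_le_pow _ _ hp.pos
  induction u with
  | zero => simp
  | succ v ih =>
      have hv : (((p ^ n - 1).choose v : F)) = (-1) ^ v := ih (by omega)
      have pas : (p ^ n).choose (v + 1) = (p ^ n - 1).choose v + (p ^ n - 1).choose (v + 1) := by
        conv_lhs => rw [show p ^ n = (p ^ n - 1) + 1 by omega]
        rw [Nat.choose_succ_succ]
      have hdvd : p ∣ (p ^ n).choose (v + 1) := hp.dvd_choose_pow (by omega) (by omega)
      have hz : (((p ^ n).choose (v + 1) : F)) = 0 := by
        exact_mod_cast (CharP.cast_eq_zero_iff F p _).mpr hdvd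
      rw [pas] at hz
      push_cast at hz
      rw [hv] at hz
      rw [pow_succ]
      linear_combination hz

lemma lucas_pow (p : ℕ) (hp : p.Prime) (F : Type*) [Field F] [CharP F p]
    (n a u : ℕ) :
    (((a * p ^ n).choose u : F)) =
      if p ^ n ∣ u then ((a.choose (u / p ^ n) : F)) else 0 := by
  haveI := Fact.mk hp
  have hpn : 0 < p ^ n := Nat.pow_pos hp.pos
  have hchar : (Polynomial.X + 1 : Polynomial F) ^ (p ^ n) = Polynomial.X ^ (p ^ n) + 1 := by
    rw [add_pow_char_pow]
    simp
  have key : ((Polynomial.X + 1 : Polynomial F)) ^ (a * p ^ n)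
      = ∑ k ∈ Finset.range (a + 1),
          Polynomial.C ((a.choose k : F)) * Polynomial.X ^ (p ^ n * k) := by
    rw [mul_comm, pow_mul, hchar, add_pow]
    apply Finset.sum_congr rfl
    intro k hk
    rw [one_pow, mul_one, ← pow_mul, mul_comm (Polynomial.X ^ (p ^ n * k))]
    congr 1
  have h1 := Polynomial.coeff_X_add_one_pow F (a * p ^ n) u
  rw [key, Polynomial.finset_sum_coeff] at h1
  simp only [Polynomial.coeff_C_mul, Polynomial.coeff_X_pow] at h1
  rw [← h1]
  by_cases hdvd : p ^ n ∣ u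
  · rw [if_pos hdvd]
    obtain ⟨w0, rfl⟩ := hdvd
    rw [Nat.mul_div_cancel_left _ hpn]
    by_cases hw : w0 ≤ a
    · rw [Finset.sum_eq_single w0]
      · rw [if_pos rfl, mul_one]
      · intro k hk hne
        rw [if_neg, mul_zero]
        intro h
        exact hne (by
          have := Nat.eq_of_mul_eq_mul_left hpn h.symm
          omega)
      · intro h
        exact absurd (Finset.mem_range.mpr (by omega)) h
    · rw [Nat.choose_eq_zero_of_lt (by omega), Nat.cast_zero]
      apply Finset.sum_eq_zero
      intro k hk
      rw [if_neg, mul_zero]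
      intro h
      have := Nat.eq_of_mul_eq_mul_left hpn h.symm
      have := Finset.mem_range.mp hk
      omega
  · rw [if_neg hdvd]
    apply Finset.sum_eq_zero
    intro k hk
    rw [if_neg, mul_zero]
    intro h
    exact hdvd ⟨k, h⟩

end S15

namespace S15
open Polynomial

lemma poly_vanish (p : ℕ) (hp : p.Prime) (F : Type*) [Field F] [CharP F p]
    (n : ℕ) : ∀ (a : ℕ) (g : Polynomial F) (lam : F), lam ≠ 0 →
      a + g.natDegree ≤ n → g.natDegree < p →
      (Polynomial.X - Polynomial.C lam) ^ a ∣ g → g.support.card ≤ a → g = 0 := by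
  induction n with
  | zero =>
      intro a g lam hlam hn hdeg hdvd hcard
      have ha : a = 0 := by omega
      subst ha
      rw [← Polynomial.support_eq_empty, ← Finset.card_eq_zero]
      omega
  | succ n ih =>
      intro a g lam hlam hn hdeg hdvd hcard
      match a with
      | 0 =>
          rw [← Polynomial.support_eq_empty, ← Finset.card_eq_zero]
          omega
      | a' + 1 =>
        by_contra hg
        by_cases h0 : g.coeff 0 = 0
        · -- X divides g; strip a factor of X
          obtain ⟨h, rfl⟩ := Polynomial.X_dvd_iff.mpr h0
          have hh : h ≠ 0 := by rintro rfl; simp at hg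
          have hXne : (Polynomial.X : Polynomial F) ≠ 0 := Polynomial.X_ne_zero
          have hcop : IsCoprime ((Polynomial.X - Polynomial.C lam) ^ (a' + 1))
              (Polynomial.X : Polynomial F) := by
            apply IsCoprime.pow_left
            refine ⟨-Polynomial.C lam⁻¹, Polynomial.C lam⁻¹, ?_⟩
            have : (Polynomial.C lam⁻¹) * (Polynomial.C lam) = 1 := by
              rw [← Polynomial.C_mul, inv_mul_cancel₀ hlam, Polynomial.C_1]
            ring_nf
            linear_combination this
          have hdvd' : (Polynomial.X - Polynomial.C lam) ^ (a' + 1) ∣ h :=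
            hcop.dvd_of_dvd_mul_left hdvd
          have hdegmul : (Polynomial.X * h).natDegree = h.natDegree + 1 := by
            rw [Polynomial.natDegree_mul hXne hh, Polynomial.natDegree_X]
            omega
          have hsupp : (Polynomial.X * h).support.card = h.support.card := by
            have : (Polynomial.X * h).support =
                h.support.map ⟨fun m => m + 1, fun a b hab => by simpa using hab⟩ := by
              ext m
              simp only [Polynomial.mem_support_iff, Finset.mem_map,
                Function.Embedding.coeFn_mk]
              constructor
              · intro hm
                match m with
                | 0 =>
                    exact absurd (by rw [Polynomial.mul_coeff_zero, Polynomial.coeff_X_zero,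
                      zero_mul]) hm
                | m + 1 =>
                    rw [Polynomial.coeff_X_mul] at hm
                    exact ⟨m, hm, rfl⟩
              · rintro ⟨m', hm', rfl⟩
                show (Polynomial.X * h).coeff (m' + 1) ≠ 0
                rw [Polynomial.coeff_X_mul]
                exact hm'
            rw [this, Finset.card_map]
          exact hh (ih (a' + 1) h lam hlam (by omega) (by omega) hdvd' (by omega))
        · -- coeff 0 ≠ 0 : use the derivative
          obtain ⟨q, hq⟩ := hdvd
          have hder : Polynomial.derivative g
              = Polynomial.C ((a' + 1 : ℕ) : F) * (Polynomial.X - Polynomial.C lam) ^ a' * q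
                + (Polynomial.X - Polynomial.C lam) ^ (a' + 1) * Polynomial.derivative q := by
            rw [hq, Polynomial.derivative_mul, Polynomial.derivative_pow]
            simp only [Polynomial.derivative_sub, Polynomial.derivative_X,
              Polynomial.derivative_C, sub_zero, Nat.add_sub_cancel]
            ring
          have hdvd' : (Polynomial.X - Polynomial.C lam) ^ a' ∣ Polynomial.derivative g := by
            rw [hder]
            apply dvd_add
            · exact ⟨Polynomial.C ((a' + 1 : ℕ) : F) * q, by ring⟩
            · exact ⟨(Polynomial.X - Polynomial.C lam) * Polynomial.derivative q, by ring⟩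
          have hsup : (Polynomial.derivative g).support ⊆
              (g.support.erase 0).image (· - 1) := by
            intro m hm
            rw [Polynomial.mem_support_iff, Polynomial.coeff_derivative] at hm
            have : g.coeff (m + 1) ≠ 0 := by
              intro hz; rw [hz] at hm; simp at hm
            refine Finset.mem_image.mpr ⟨m + 1, ?_, by omega⟩
            exact Finset.mem_erase.mpr ⟨by omega, Polynomial.mem_support_iff.mpr this⟩
          have h0mem : 0 ∈ g.support := Polynomial.mem_support_iff.mpr h0
          have hcard' : (Polynomial.derivative g).support.card ≤ a' := by
            calc (Polynomial.derivative g).support.card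
                ≤ ((g.support.erase 0).image (· - 1)).card := Finset.card_le_card hsup
              _ ≤ (g.support.erase 0).card := Finset.card_image_le
              _ = g.support.card - 1 := Finset.card_erase_of_mem h0mem
              _ ≤ a' := by omega
          have hdz : Polynomial.derivative g = 0 := by
            apply ih a' (Polynomial.derivative g) lam hlam
            · have := Polynomial.natDegree_derivative_le g; omega
            · have := Polynomial.natDegree_derivative_le g; omega
            · exact hdvd'
            · exact hcard'
          have hconst : g.natDegree = 0 := by
            by_contra hne
            have hmem : g.coeff g.natDegree ≠ 0 := by
              rw [← Polynomial.leadingCoeff]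
              exact Polynomial.leadingCoeff_ne_zero.mpr hg
            have hc := Polynomial.coeff_derivative g (g.natDegree - 1)
            rw [hdz] at hc
            rw [show g.natDegree - 1 + 1 = g.natDegree by omega] at hc
            have hcast : ((g.natDegree - 1 : ℕ) : F) + 1 = (g.natDegree : F) := by
              push_cast [Nat.cast_sub (by omega : 1 ≤ g.natDegree)]
              ring
            rw [hcast] at hc
            have hne2 : (g.natDegree : F) ≠ 0 := by
              intro hz
              have := (CharP.cast_eq_zero_iff F p _).mp hz
              have := Nat.le_of_dvd (by omega) this
              omega
            simp only [Polynomial.coeff_zero] at hc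
            exact hne2 (by
              rcases mul_eq_zero.mp hc.symm with h | h
              · exact absurd h hmem
              · exact h)
          obtain ⟨c, rfl⟩ := Polynomial.natDegree_eq_zero.mp hconst
          have hdvd2 := Polynomial.natDegree_le_of_dvd ⟨q, hq⟩ hg
          rw [Polynomial.natDegree_pow, Polynomial.natDegree_X_sub_C,
            Polynomial.natDegree_C] at hdvd2
          omega

end S15

namespace S15
open Polynomial

lemma M1_invertible (p : ℕ) (hp : p.Prime) (F : Type*) [Field F] [CharP F p]
    (t rn sn : ℕ) (htr : t ≤ rn) (hts : t ≤ sn) (hbound : rn + sn - t < p)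
    (M1 : Matrix (Fin (t + 1)) (Fin (t + 1)) F)
    (hM1 : ∀ i j : Fin (t + 1), M1 i j =
      binF F ((rn : ℤ) + sn - 2 * t) ((rn : ℤ) - t + (j : ℤ) - (i : ℤ))) :
    IsUnit M1 := by
  set aa : ℕ := rn + sn - 2 * t with haa
  set cs : ℕ := rn - t with hcs
  have haaZ : ((rn : ℤ) + sn - 2 * t) = (aa : ℤ) := by push_cast [haa]; omega
  have hcsaa : cs ≤ aa := by omega
  rw [Matrix.isUnit_iff_isUnit_det, isUnit_iff_ne_zero]
  intro hdet
  obtain ⟨v, hv, hmv⟩ := Matrix.exists_mulVec_eq_zero_iff.mpr hdet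
  set f : Polynomial F := ∑ j : Fin (t + 1), Polynomial.C (v j) * Polynomial.X ^ (t - (j : ℕ))
    with hf
  set g : Polynomial F := f * (Polynomial.X + 1) ^ aa with hg
  -- coefficient formula for g
  have hcoeff : ∀ d : ℕ, g.coeff d = ∑ j : Fin (t + 1),
      v j * (if t - (j : ℕ) ≤ d then ((aa.choose (d - (t - (j : ℕ))) : F)) else 0) := by
    intro d
    rw [hg, hf, Finset.sum_mul, Polynomial.finset_sum_coeff]
    apply Finset.sum_congr rfl
    intro j _
    rw [show Polynomial.C (v j) * Polynomial.X ^ (t - (j : ℕ)) * (Polynomial.X + 1) ^ aa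
        = Polynomial.C (v j) * ((Polynomial.X + 1) ^ aa * Polynomial.X ^ (t - (j : ℕ))) by ring]
    rw [Polynomial.coeff_C_mul, Polynomial.coeff_mul_X_pow']
    split_ifs with h
    · rw [Polynomial.coeff_X_add_one_pow]
    · rw [mul_zero]
  -- middle coefficients vanish
  have hmid : ∀ d : ℕ, cs ≤ d → d ≤ cs + t → g.coeff d = 0 := by
    intro d hd1 hd2
    have hi : cs + t - d ≤ t := by omega
    set i : Fin (t + 1) := ⟨cs + t - d, by omega⟩ with hidef
    have := congrFun hmv i
    rw [Matrix.mulVec, dotProduct] at this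
    simp only [Pi.zero_apply] at this
    rw [hcoeff d]
    refine Eq.trans (Finset.sum_congr rfl ?_) this
    intro j _
    rw [hM1 i j, mul_comm]
    congr 1
    have hij : (i : ℕ) = cs + t - d := rfl
    rw [haaZ]
    unfold binF
    by_cases hc : t - (j : ℕ) ≤ d
    · have hb : ((rn : ℤ) - t + (j : ℤ) - (i : ℤ)) = ((d - (t - (j : ℕ)) : ℕ) : ℤ) := by
        push_cast [hij]
        omega
      rw [if_pos hc, hb, Int.toNat_natCast, Int.toNat_natCast]
      by_cases hba : ((d - (t - (j : ℕ)) : ℕ)) ≤ aa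
      · rw [if_pos ⟨by positivity, by exact_mod_cast hba⟩]
      · rw [Nat.choose_eq_zero_of_lt (by omega), Nat.cast_zero, if_neg]
        rintro ⟨h1, h2⟩
        exact hba (by exact_mod_cast h2)
    · rw [if_neg hc, if_neg (by rintro ⟨h1, -⟩; omega :
        ¬((0:ℤ) ≤ (rn : ℤ) - ↑t + (↑(j:ℕ):ℤ) - (↑(i:ℕ):ℤ) ∧
          (rn : ℤ) - ↑t + (↑(j:ℕ):ℤ) - (↑(i:ℕ):ℤ) ≤ ((aa:ℕ):ℤ)))]
  -- degree bound
  have hdegf : f.natDegree ≤ t := by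
    rw [hf]
    refine le_trans (Polynomial.natDegree_sum_le _ _) ?_
    rw [Finset.fold_max_le]
    refine ⟨by omega, ?_⟩
    intro j _
    refine le_trans (Polynomial.natDegree_C_mul_le _ _) ?_
    rw [Polynomial.natDegree_X_pow]
    omega
  have hdegg : g.natDegree ≤ aa + t := by
    rw [hg]
    refine le_trans (Polynomial.natDegree_mul_le) ?_
    have hx1 : (Polynomial.X + 1 : Polynomial F).natDegree = 1 := by
      rw [← Polynomial.C_1, Polynomial.natDegree_X_add_C]
    have h2 : ((Polynomial.X + 1 : Polynomial F) ^ aa).natDegree ≤ aa := by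
      rw [Polynomial.natDegree_pow, hx1, mul_one]
    omega
  -- support bound
  have hsupp : g.support ⊆ (Finset.range (aa + t + 1)) \ (Finset.Icc cs (cs + t)) := by
    intro d hd
    rw [Polynomial.mem_support_iff] at hd
    rw [Finset.mem_sdiff, Finset.mem_range, Finset.mem_Icc]
    constructor
    · have := Polynomial.le_natDegree_of_ne_zero hd
      omega
    · intro hmem
      exact hd (hmid d hmem.1 hmem.2)
  have hcard : g.support.card ≤ aa := by
    refine le_trans (Finset.card_le_card hsupp) ?_
    rw [Finset.card_sdiff_of_subset (by
      intro d hd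
      rw [Finset.mem_Icc] at hd
      rw [Finset.mem_range]
      omega)]
    rw [Finset.card_range, Nat.card_Icc]
    omega
  -- apply the vanishing lemma
  have hXone : (Polynomial.X + 1 : Polynomial F)
      = Polynomial.X - Polynomial.C (-1 : F) := by
    rw [map_neg, sub_neg_eq_add, Polynomial.C_1]
  have hgz : g = 0 := by
    refine poly_vanish p hp F (aa + g.natDegree) aa g (-1) (by norm_num) le_rfl
      (by omega) ?_ hcard
    rw [← hXone]
    exact ⟨f, by rw [hg]; ring⟩
  have hfz : f = 0 := by
    have hne : ((Polynomial.X + 1 : Polynomial F) ^ aa) ≠ 0 := by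
      apply pow_ne_zero
      rw [← Polynomial.C_1]
      exact (Polynomial.monic_X_add_C (1 : F)).ne_zero
    rcases mul_eq_zero.mp (hg ▸ hgz) with h | h
    · exact h
    · exact absurd h hne
  apply hv
  funext j
  have := congrArg (fun q => Polynomial.coeff q (t - (j : ℕ))) hfz
  simp only [hf, Polynomial.finset_sum_coeff, Polynomial.coeff_C_mul,
    Polynomial.coeff_X_pow, Polynomial.coeff_zero] at this
  rw [Fintype.sum_eq_single j (by
    intro j' hne
    rw [if_neg, mul_zero]
    intro h
    exact hne (by
      have hj := j.isLt
      have hj' := j'.isLt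
      have : (j' : ℕ) = (j : ℕ) := by omega
      exact Fin.ext this))] at this
  rw [if_pos rfl, mul_one] at this
  simpa using this

end S15

namespace S15

lemma neg_one_pow_congr (p : ℕ) (hp : p.Prime) (F : Type*) [Field F] [CharP F p]
    (a b : ℕ) (h : p ≠ 2 → a % 2 = b % 2) : (-1 : F) ^ a = (-1 : F) ^ b := by
  by_cases h2 : p = 2
  · subst h2
    have h0 : ((2 : ℕ) : F) = 0 := CharP.cast_eq_zero F 2
    have : (-1 : F) = 1 := by push_cast at h0; linear_combination -h0
    rw [this, one_pow, one_pow]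
  · rw [neg_one_pow_eq_pow_mod_two, h h2, ← neg_one_pow_eq_pow_mod_two]

lemma entry_eq (F : Type*) [Field F] (r s : ℕ) (A B : Matrix (Fin r) (Fin s) F)
    (h : ∀ x y, x < r → y < s → eE F r s A x y = eE F r s B x y) : A = B := by
  ext i j
  have h2 := h i j i.isLt j.isLt
  rw [eE_apply_lt F r s A _ _ i.isLt j.isLt, eE_apply_lt F r s B _ _ i.isLt j.isLt] at h2
  simpa using h2

lemma unique_window (P E i i0 m' : ℕ) (hE : E = i0 * P + m') (hm : m' < P)
    (h1 : i * P ≤ E) (h2 : E < (i + 1) * P) : i = i0 := by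
  rcases Nat.lt_trichotomy i i0 with h | h | h
  · have h3 : (i + 1) * P ≤ i0 * P := Nat.mul_le_mul_right _ h
    omega
  · exact h
  · have h3 : (i0 + 1) * P ≤ i * P := Nat.mul_le_mul_right _ h
    rw [Nat.succ_mul] at h3
    omega

end S15


open S15 in
set_option maxHeartbeats 4000000 in
/-- case `1 ≤ k ≤ max(e,0)`. -/
theorem stmt15 (p : ℕ) (hp : p.Prime) (F : Type*) [Field F] [CharP F p]
    (r s n rn sn R S : ℕ) (hr : 0 < r) (hs : 0 < s)
    (hn1 : p ^ n ≤ max r s) (hn2 : max r s < p ^ (n + 1))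
    (hrn : rn < p) (hsn : sn < p) (hRp : R < p ^ n) (hSp : S < p ^ n)
    (hrd : r = rn * p ^ n + R) (hsd : s = sn * p ^ n + S)
    (t k l : ℕ) (ht : t ≤ min rn sn)
    (hk1 : 1 ≤ k) (hk2 : k ≤ R + S - p ^ n)
    (hl : l = t * p ^ n + k)
    (hl1 : max ((r : ℤ) + s - p ^ (n + 1)) 0 + 1 ≤ (l : ℤ)) (hl2 : l ≤ min r s)
    (zl : Matrix (Fin r) (Fin s) F)
    (hzl : zl = (-1 : F) ^ (R - k) •
      ∑ i ∈ Finset.range (t + 1), (-1 : F) ^ i •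
        vv F r s ((i : ℤ) * p ^ n + R + 1 - k) (((t : ℤ) - i) * p ^ n + S))
    (M1 : Matrix (Fin (t + 1)) (Fin (t + 1)) F)
    (hM1 : ∀ i j : Fin (t + 1), M1 i j =
      binF F ((rn : ℤ) + sn - 2 * t) ((rn : ℤ) - t + (j : ℤ) - (i : ℤ)))
    (X : Fin (t + 1) → F) (hX : ∀ i : Fin (t + 1), X i = (-1 : F) ^ (i : ℕ))
    (zeta : Fin (t + 1) → F) (hzeta : zeta = M1⁻¹.mulVec X)
    (yl : Matrix (Fin r) (Fin s) F)
    (hyl : yl = (-1 : F) ^ (R - k) •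
      ∑ i : Fin (t + 1), zeta i •
        vv F r s (((rn : ℤ) - t + (i : ℤ)) * p ^ n + R + 1 - k)
          (((sn : ℤ) - (i : ℤ)) * p ^ n + S)) :
    ((TT F r s) ^ (p ^ n - 1)) zl
        = xx F r s (((t : ℤ) - 1) * p ^ n + R + S + 1 - k) ∧
      IsUnit M1 ∧
      ((TT F r s) ^ ((rn + sn - 2 * t) * p ^ n)) yl = zl := by
  have hppos : 0 < p := hp.pos
  have hpn : 0 < p ^ n := Nat.pow_pos hppos
  have hRS : k + p ^ n ≤ R + S := by omega
  have hkR : k + 1 ≤ R := by omega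
  have htr : t ≤ rn := le_trans ht (Nat.min_le_left _ _)
  have hts : t ≤ sn := le_trans ht (Nat.min_le_right _ _)
  have hrZ : (r : ℤ) = rn * p ^ n + R := by rw [hrd]; push_cast; ring
  have hsZ : (s : ℤ) = sn * p ^ n + S := by rw [hsd]; push_cast; ring
  have hbound : rn + sn - t < p := by
    by_contra hb
    push_neg at hb
    have h1 : p + t ≤ rn + sn := by omega
    have h2 : (p + t) * p ^ n ≤ (rn + sn) * p ^ n := Nat.mul_le_mul_right _ h1
    have h3 : (r : ℤ) + s - p ^ (n + 1) + 1 ≤ l :=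
      le_trans (by
        have := le_max_left ((r : ℤ) + s - p ^ (n + 1)) (0 : ℤ)
        omega) hl1
    rw [hrZ, hsZ, hl] at h3
    have h2' : ((p : ℤ) + t) * p ^ n ≤ ((rn : ℤ) + sn) * p ^ n := by exact_mod_cast h2
    have hRSZ : (k : ℤ) + p ^ n ≤ (R : ℤ) + S := by exact_mod_cast hRS
    have hpow : ((p : ℤ)) ^ (n + 1) = (p : ℤ) * (p : ℤ) ^ n := by ring
    rw [hpow] at h3
    push_cast at h3
    linarith [h3, h2', hRSZ]
  -- ===== Part 2 =====
  have hM1unit : IsUnit M1 := M1_invertible p hp F t rn sn htr hts (by omega) M1 hM1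
  have hmvX : M1.mulVec zeta = X := by
    rw [hzeta, Matrix.mulVec_mulVec,
      Matrix.mul_nonsing_inv _ ((Matrix.isUnit_iff_isUnit_det M1).mp hM1unit),
      Matrix.one_mulVec]
  -- ===== Part 1 =====
  have hNZ : ((p ^ n - 1 : ℕ) : ℤ) = (p : ℤ) ^ n - 1 := by
    rw [Nat.cast_sub (by omega : 1 ≤ p ^ n)]; push_cast; ring
  have hpart1 : ((TT F r s) ^ (p ^ n - 1)) zl
      = xx F r s (((t : ℤ) - 1) * p ^ n + R + S + 1 - k) := by
    set m0 : ℤ := ((t : ℤ) - 1) * p ^ n + R + S + 1 - k with hm0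
    apply entry_eq
    intro x y hx hy
    have hLHS : eE F r s (((TT F r s) ^ (p ^ n - 1)) zl) x y
        = (-1 : F) ^ (R - k) * ∑ i ∈ Finset.range (t + 1), (-1 : F) ^ i *
            (if ((x : ℤ) + 1 ≤ (i : ℤ) * p ^ n + R + 1 - k ∧
                (y : ℤ) + 1 ≤ ((t : ℤ) - i) * p ^ n + S ∧
                (x : ℤ) + y + ((p ^ n - 1 : ℕ) : ℤ) + 2 =
                  ((i : ℤ) * p ^ n + R + 1 - k) + (((t : ℤ) - i) * p ^ n + S))
              then (((p ^ n - 1).choose (((i : ℤ) * p ^ n + R + 1 - k) - 1 - (x : ℤ)).toNat : F))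
              else 0) := by
      rw [hzl]
      simp only [map_smul, map_sum, Pi.smul_apply, smul_eq_mul, Finset.sum_apply]
      congr 1
      apply Finset.sum_congr rfl
      intro i hi
      congr 1
      have hit : i ≤ t := by have := Finset.mem_range.mp hi; omega
      apply eE_TT_pow_vv F r s _ _ ?_ ?_ _ x y hx hy
      · rw [hrZ]
        have h1 : ((i : ℤ)) * p ^ n ≤ (rn : ℤ) * p ^ n := by
          apply mul_le_mul_of_nonneg_right _ (by positivity)
          exact_mod_cast le_trans hit htr
        have hkZ : (1 : ℤ) ≤ k := by exact_mod_cast hk1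
        linarith
      · rw [hsZ]
        have h1 : ((t : ℤ) - i) * p ^ n ≤ (sn : ℤ) * p ^ n := by
          apply mul_le_mul_of_nonneg_right _ (by positivity)
          have h2 : (t : ℤ) ≤ sn := by exact_mod_cast hts
          have h3 : (0 : ℤ) ≤ i := by positivity
          linarith
        linarith
    have hRHS : eE F r s (xx F r s m0) x y
        = ∑ j ∈ Finset.range m0.toNat, (-1 : F) ^ j *
            (if ((x : ℤ) + 1 = (j : ℤ) + 1 ∧ (y : ℤ) + 1 = m0 - j ∧ x < r ∧ y < s)
              then (1 : F) else 0) := by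
      rw [xx]
      simp only [map_sum, map_smul, Pi.smul_apply, smul_eq_mul, Finset.sum_apply]
      apply Finset.sum_congr rfl
      intro j hj
      rw [eE_vv]
    rw [hLHS, hRHS]
    by_cases hdiag : (x : ℤ) + y + 1 = m0
    · -- on the antidiagonal
      set E : ℕ := x + k + p ^ n - 1 - R with hEdef
      have hER : E + R = x + k + p ^ n - 1 := by omega
      set i0 : ℕ := E / p ^ n with hi0def
      set m' : ℕ := E % p ^ n with hm'def
      have hE : E = i0 * p ^ n + m' := by
        rw [Nat.mul_comm]; exact (Nat.div_add_mod E (p ^ n)).symm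
      have hm'lt : m' < p ^ n := Nat.mod_lt _ hpn
      have hEZ : (E : ℤ) = (x : ℤ) + k + p ^ n - 1 - R := by omega
      have hEZ2 : (E : ℤ) = (i0 : ℤ) * p ^ n + m' := by exact_mod_cast congrArg (fun z : ℕ => (z : ℤ)) hE
      have hynn : (0 : ℤ) ≤ (y : ℤ) := by positivity
      have hm'nn : (0 : ℤ) ≤ (m' : ℤ) := by positivity
      have hm'ltZ : (m' : ℤ) < (p : ℤ) ^ n := by exact_mod_cast hm'lt
      have hSZ : (S : ℤ) < (p : ℤ) ^ n := by exact_mod_cast hSp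
      have hi0t : i0 ≤ t := by
        by_contra hgt
        have h1 : (t + 1) * p ^ n ≤ i0 * p ^ n := Nat.mul_le_mul_right _ (by omega)
        have h1' : ((t : ℤ) + 1) * p ^ n ≤ (i0 : ℤ) * p ^ n := by exact_mod_cast h1
        linarith
      have hLsum : ∑ i ∈ Finset.range (t + 1), (-1 : F) ^ i *
            (if ((x : ℤ) + 1 ≤ (i : ℤ) * p ^ n + R + 1 - k ∧
                (y : ℤ) + 1 ≤ ((t : ℤ) - i) * p ^ n + S ∧
                (x : ℤ) + y + ((p ^ n - 1 : ℕ) : ℤ) + 2 =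
                  ((i : ℤ) * p ^ n + R + 1 - k) + (((t : ℤ) - i) * p ^ n + S))
              then (((p ^ n - 1).choose (((i : ℤ) * p ^ n + R + 1 - k) - 1 - (x : ℤ)).toNat : F))
              else 0)
          = (-1 : F) ^ i0 * (-1 : F) ^ (p ^ n - 1 - m') := by
        rw [Finset.sum_eq_single_of_mem i0 (Finset.mem_range.mpr (by omega))]
        · have hu : (((i0 : ℤ) * p ^ n + R + 1 - k) - 1 - (x : ℤ))
              = ((p ^ n - 1 - m' : ℕ) : ℤ) := by
            rw [Nat.cast_sub (by omega : m' ≤ p ^ n - 1), Nat.cast_sub (by omega : 1 ≤ p ^ n)]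
            push_cast
            linear_combination hEZ - hEZ2
          rw [if_pos, hu, Int.toNat_natCast,
            choose_pow_sub_one p hp F n _ (by omega)]
          refine ⟨by linarith, by linarith, ?_⟩
          rw [hNZ]
          linear_combination hdiag + hm0
        · intro i hi hne
          split_ifs with hcond
          · exfalso
            obtain ⟨c1, c2, c3⟩ := hcond
            have w2' : (E : ℤ) < ((i : ℤ) + 1) * p ^ n := by linarith
            have w1' : (i : ℤ) * p ^ n ≤ (E : ℤ) := by linarith
            have w1 : i * p ^ n ≤ E := by exact_mod_cast w1'
            have w2 : E < (i + 1) * p ^ n := by exact_mod_cast w2'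
            exact hne (unique_window (p ^ n) E i i0 m' hE hm'lt w1 w2)
          · rw [mul_zero]
      have hxm : x < m0.toNat := by
        have h1 : (x : ℤ) < m0 := by linarith
        have h2 : (0 : ℤ) ≤ m0 := by linarith
        omega
      have hRsum : ∑ j ∈ Finset.range m0.toNat, (-1 : F) ^ j *
            (if ((x : ℤ) + 1 = (j : ℤ) + 1 ∧ (y : ℤ) + 1 = m0 - j ∧ x < r ∧ y < s)
              then (1 : F) else 0)
          = (-1 : F) ^ x := by
        rw [Finset.sum_eq_single_of_mem x (Finset.mem_range.mpr hxm)]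
        · rw [if_pos ⟨rfl, by linarith, hx, hy⟩, mul_one]
        · intro j hj hne
          split_ifs with hcond
          · exfalso
            have c1 := hcond.1
            omega
          · rw [mul_zero]
      rw [hLsum, hRsum, ← pow_add, ← pow_add]
      apply neg_one_pow_congr p hp F
      intro hp2
      obtain ⟨c, hc⟩ := (hp.odd_of_ne_two hp2).pow (n := n)
      have hprod : i0 * p ^ n = 2 * (i0 * c) + i0 := by rw [hc]; ring
      omega
    · -- off the antidiagonal: both sides vanish
      rw [Finset.sum_eq_zero, Finset.sum_eq_zero, mul_zero]
      · intro j hj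
        split_ifs with hcond
        · exfalso
          obtain ⟨c1, c2, -⟩ := hcond
          exact hdiag (by linarith)
        · rw [mul_zero]
      · intro i hi
        split_ifs with hcond
        · exfalso
          obtain ⟨-, -, c3⟩ := hcond
          rw [hNZ] at c3
          exact hdiag (by linear_combination c3)
        · rw [mul_zero]
  refine ⟨hpart1, hM1unit, ?_⟩
  -- ===== Part 3 =====
  have haaZ : (((rn + sn - 2 * t) : ℕ) : ℤ) = (rn : ℤ) + sn - 2 * t := by omega
  have hNNZ : ((((rn + sn - 2 * t) * p ^ n) : ℕ) : ℤ)
      = ((rn : ℤ) + sn - 2 * t) * (p : ℤ) ^ n := by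
    rw [Nat.cast_mul, haaZ]; push_cast; ring
  have hRkZ : (((R - k) : ℕ) : ℤ) = (R : ℤ) - k := by omega
  have hpnZ : (0 : ℤ) < (p : ℤ) ^ n := by positivity
  apply entry_eq
  intro x y hx hy
  have hLHS : eE F r s (((TT F r s) ^ ((rn + sn - 2 * t) * p ^ n)) yl) x y
      = (-1 : F) ^ (R - k) * ∑ q : Fin (t + 1), zeta q *
          (if ((x : ℤ) + 1 ≤ ((rn : ℤ) - t + q) * p ^ n + R + 1 - k ∧
              (y : ℤ) + 1 ≤ ((sn : ℤ) - q) * p ^ n + S ∧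
              (x : ℤ) + y + ((((rn + sn - 2 * t) * p ^ n) : ℕ) : ℤ) + 2 =
                (((rn : ℤ) - t + q) * p ^ n + R + 1 - k) + (((sn : ℤ) - q) * p ^ n + S))
            then ((((rn + sn - 2 * t) * p ^ n).choose
              ((((rn : ℤ) - t + q) * p ^ n + R + 1 - k) - 1 - (x : ℤ)).toNat : F))
            else 0) := by
    rw [hyl]
    simp only [map_smul, map_sum, Pi.smul_apply, smul_eq_mul, Finset.sum_apply]
    congr 1
    apply Finset.sum_congr rfl
    intro q _
    congr 1
    have hqt : (q : ℕ) ≤ t := by omega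
    apply eE_TT_pow_vv F r s _ _ ?_ ?_ _ x y hx hy
    · rw [hrZ]
      have h1 : ((rn : ℤ) - t + q) * p ^ n ≤ (rn : ℤ) * p ^ n := by
        apply mul_le_mul_of_nonneg_right _ (by positivity)
        have h2 : ((q : ℕ) : ℤ) ≤ t := by exact_mod_cast hqt
        have h3 : (t : ℤ) ≤ rn := by exact_mod_cast htr
        linarith
      have hkZ : (1 : ℤ) ≤ k := by exact_mod_cast hk1
      linarith
    · rw [hsZ]
      have h1 : ((sn : ℤ) - q) * p ^ n ≤ (sn : ℤ) * p ^ n := by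
        apply mul_le_mul_of_nonneg_right _ (by positivity)
        have h2 : (0 : ℤ) ≤ ((q : ℕ) : ℤ) := by positivity
        linarith
      linarith
  have hRHS : eE F r s zl x y
      = (-1 : F) ^ (R - k) * ∑ i ∈ Finset.range (t + 1), (-1 : F) ^ i *
          (if ((x : ℤ) + 1 = (i : ℤ) * p ^ n + R + 1 - k ∧
              (y : ℤ) + 1 = ((t : ℤ) - i) * p ^ n + S ∧ x < r ∧ y < s)
            then (1 : F) else 0) := by
    rw [hzl]
    simp only [map_smul, map_sum, Pi.smul_apply, smul_eq_mul, Finset.sum_apply]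
    congr 1
    apply Finset.sum_congr rfl
    intro i _
    rw [eE_vv]
  rw [hLHS, hRHS]
  by_cases hdiag : (x : ℤ) + y + 2 = (t : ℤ) * p ^ n + R + S + 1 - k
  · -- on the antidiagonal of z_l
    by_cases hmod : x % p ^ n = R - k
    · -- surviving position
      set i0 : ℕ := x / p ^ n with hi0def
      have hx0 : x = i0 * p ^ n + (R - k) := by
        rw [hi0def, Nat.mul_comm, ← hmod]
        exact (Nat.div_add_mod x (p ^ n)).symm
      have hx0Z : (x : ℤ) = (i0 : ℤ) * p ^ n + ((R : ℤ) - k) := by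
        rw [← hRkZ]
        exact_mod_cast congrArg (fun z : ℕ => (z : ℤ)) hx0
      have hynn : (0 : ℤ) ≤ (y : ℤ) := by positivity
      have hSZ : (S : ℤ) < (p : ℤ) ^ n := by exact_mod_cast hSp
      have hi0t : i0 ≤ t := by
        by_contra hgt
        have h1 : (t + 1) * p ^ n ≤ i0 * p ^ n := Nat.mul_le_mul_right _ (by omega)
        have h1' : ((t : ℤ) + 1) * p ^ n ≤ (i0 : ℤ) * p ^ n := by exact_mod_cast h1
        linarith
      set i0F : Fin (t + 1) := ⟨i0, by omega⟩ with hi0F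
      have hIF : ∀ q ∈ (Finset.univ : Finset (Fin (t + 1))), zeta q *
          (if ((x : ℤ) + 1 ≤ ((rn : ℤ) - t + q) * p ^ n + R + 1 - k ∧
              (y : ℤ) + 1 ≤ ((sn : ℤ) - q) * p ^ n + S ∧
              (x : ℤ) + y + ((((rn + sn - 2 * t) * p ^ n) : ℕ) : ℤ) + 2 =
                (((rn : ℤ) - t + q) * p ^ n + R + 1 - k) + (((sn : ℤ) - q) * p ^ n + S))
            then ((((rn + sn - 2 * t) * p ^ n).choose
              ((((rn : ℤ) - t + q) * p ^ n + R + 1 - k) - 1 - (x : ℤ)).toNat : F))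
            else 0) = M1 i0F q * zeta q := by
        intro q _
        rw [mul_comm]
        congr 1
        have hqt : (q : ℕ) ≤ t := by omega
        set w : ℕ := rn - t + (q : ℕ) with hwdef
        have hwZ : (w : ℤ) = (rn : ℤ) - t + ((q : ℕ) : ℤ) := by omega
        have hi0FZ : ((i0F : ℕ) : ℤ) = (i0 : ℤ) := by rw [hi0F]
        rw [hM1 i0F q, hi0FZ]
        by_cases hq1 : i0 ≤ w
        · by_cases hq2 : w ≤ i0 + (rn + sn - 2 * t)
          · have hc1 : (x : ℤ) + 1 ≤ ((rn : ℤ) - t + q) * p ^ n + R + 1 - k := by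
              have h1 : i0 * p ^ n ≤ w * p ^ n := Nat.mul_le_mul_right _ hq1
              have h1' : (i0 : ℤ) * p ^ n ≤ (w : ℤ) * p ^ n := by exact_mod_cast h1
              have h1'' : (w : ℤ) * p ^ n = ((rn : ℤ) - t + q) * p ^ n := by rw [hwZ]
              linarith
            have hc2 : (y : ℤ) + 1 ≤ ((sn : ℤ) - q) * p ^ n + S := by
              have h2 : ((t : ℤ) - i0) * p ^ n ≤ ((sn : ℤ) - q) * p ^ n := by
                apply mul_le_mul_of_nonneg_right _ (by positivity)
                have h3 : (w : ℤ) ≤ (i0 : ℤ) + (((rn + sn - 2 * t) : ℕ) : ℤ) := by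
                  exact_mod_cast Nat.cast_le.mpr hq2
                rw [haaZ] at h3
                linarith
              linarith
            have hc3 : (x : ℤ) + y + ((((rn + sn - 2 * t) * p ^ n) : ℕ) : ℤ) + 2 =
                (((rn : ℤ) - t + q) * p ^ n + R + 1 - k) + (((sn : ℤ) - q) * p ^ n + S) := by
              rw [hNNZ]
              linear_combination hdiag
            rw [if_pos ⟨hc1, hc2, hc3⟩]
            have hu : ((((rn : ℤ) - t + q) * p ^ n + R + 1 - k) - 1 - (x : ℤ))
                = (((w - i0) * p ^ n : ℕ) : ℤ) := by
              rw [Nat.cast_mul, Nat.cast_sub hq1]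
              push_cast
              linear_combination (-((p : ℤ) ^ n)) * hwZ - hx0Z
            rw [hu, Int.toNat_natCast, lucas_pow p hp F n (rn + sn - 2 * t) _,
              if_pos ⟨w - i0, Nat.mul_comm _ _⟩, Nat.mul_div_cancel _ hpn]
            have hbZ : (rn : ℤ) - t + q - (i0 : ℤ) = (((w - i0) : ℕ) : ℤ) := by omega
            unfold binF
            rw [← haaZ, hbZ, if_pos ⟨by positivity,
              by exact_mod_cast Nat.cast_le.mpr (by omega : w - i0 ≤ rn + sn - 2 * t)⟩,
              Int.toNat_natCast, Int.toNat_natCast]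
          · -- w too large : both sides are 0
            have h3 : (i0 : ℤ) + (((rn + sn - 2 * t) : ℕ) : ℤ) + 1 ≤ (w : ℤ) := by
              exact_mod_cast Nat.cast_le.mpr (by omega : i0 + (rn + sn - 2 * t) + 1 ≤ w)
            rw [haaZ] at h3
            unfold binF
            split_ifs with h1 h2 h2
            · exfalso
              obtain ⟨-, c2, -⟩ := h1
              have h4 : ((sn : ℤ) - q + 1) * p ^ n ≤ ((t : ℤ) - i0) * p ^ n := by
                apply mul_le_mul_of_nonneg_right _ (by positivity)
                linarith
              linarith [h4, hdiag, hx0Z, hSZ, hpnZ, c2]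
            · exfalso
              obtain ⟨-, c2, -⟩ := h1
              have h4 : ((sn : ℤ) - q + 1) * p ^ n ≤ ((t : ℤ) - i0) * p ^ n := by
                apply mul_le_mul_of_nonneg_right _ (by positivity)
                linarith
              linarith [h4, hdiag, hx0Z, hSZ, hpnZ, c2]
            · exfalso
              obtain ⟨-, hb2⟩ := h2
              linarith
            · rfl
        · -- w < i0 : both sides are 0
          have h3 : (w : ℤ) + 1 ≤ (i0 : ℤ) := by
            exact_mod_cast Nat.cast_le.mpr (by omega : w + 1 ≤ i0)
          have h3n : (w + 1) * p ^ n ≤ i0 * p ^ n := Nat.mul_le_mul_right _ (by omega)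
          have h3' : ((w : ℤ) + 1) * p ^ n ≤ (i0 : ℤ) * p ^ n := by exact_mod_cast h3n
          have h1'' : (w : ℤ) * p ^ n = ((rn : ℤ) - t + q) * p ^ n := by rw [hwZ]
          unfold binF
          split_ifs with h1 h2 h2
          · exfalso
            obtain ⟨c1, -, -⟩ := h1
            linarith
          · exfalso
            obtain ⟨c1, -, -⟩ := h1
            linarith
          · exfalso
            obtain ⟨hb1, -⟩ := h2
            linarith
          · rfl
      rw [Finset.sum_congr rfl hIF]
      have hdot : ∑ q : Fin (t + 1), M1 i0F q * zeta q = X i0F := by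
        rw [← hmvX]
        simp [Matrix.mulVec, dotProduct]
      rw [hdot, hX i0F]
      have hi0FZ2 : ((i0F : ℕ)) = i0 := rfl
      rw [hi0FZ2]
      have hRsum : ∑ i ∈ Finset.range (t + 1), (-1 : F) ^ i *
          (if ((x : ℤ) + 1 = (i : ℤ) * p ^ n + R + 1 - k ∧
              (y : ℤ) + 1 = ((t : ℤ) - i) * p ^ n + S ∧ x < r ∧ y < s)
            then (1 : F) else 0) = (-1 : F) ^ i0 := by
        rw [Finset.sum_eq_single_of_mem i0 (Finset.mem_range.mpr (by omega))]
        · rw [if_pos ⟨by linarith, by linarith, hx, hy⟩, mul_one]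
        · intro i hi hne
          split_ifs with hcond
          · exfalso
            have c1 := hcond.1
            have h5 : (i : ℤ) * p ^ n = (i0 : ℤ) * p ^ n := by linarith
            have h6 : (i : ℤ) = (i0 : ℤ) := mul_right_cancel₀ (by positivity) h5
            exact hne (by exact_mod_cast h6)
          · rw [mul_zero]
      rw [hRsum]
    · -- x not congruent to R - k mod p^n : everything vanishes
      rw [Finset.sum_eq_zero, Finset.sum_eq_zero, mul_zero]
      · intro i hi
        split_ifs with hcond
        · exfalso
          obtain ⟨c1, -, -⟩ := hcond
          have hxq : x = i * p ^ n + (R - k) := by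
            have h1 : (x : ℤ) = (i : ℤ) * p ^ n + (((R - k) : ℕ) : ℤ) := by
              rw [hRkZ]; linarith
            exact_mod_cast h1
          apply hmod
          rw [hxq, Nat.mul_add_mod', Nat.mod_eq_of_lt (by omega)]
        · rw [mul_zero]
      · intro q _
        split_ifs with hcond
        · obtain ⟨c1, -, -⟩ := hcond
          have hqt : (q : ℕ) ≤ t := by omega
          set w : ℕ := rn - t + (q : ℕ) with hwdef
          have hwZ : (w : ℤ) = (rn : ℤ) - t + ((q : ℕ) : ℤ) := by omega
          have hunn : (0 : ℤ) ≤ (((rn : ℤ) - t + q) * p ^ n + R + 1 - k) - 1 - (x : ℤ) := by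
            linarith
          have huZ : (((((rn : ℤ) - t + q) * p ^ n + R + 1 - k) - 1 - (x : ℤ)).toNat : ℤ)
              = (((rn : ℤ) - t + q) * p ^ n + R + 1 - k) - 1 - (x : ℤ) :=
            Int.toNat_of_nonneg hunn
          set u : ℕ := ((((rn : ℤ) - t + q) * p ^ n + R + 1 - k) - 1 - (x : ℤ)).toNat with hudef
          have hux : u + x = w * p ^ n + (R - k) := by
            have hZv : (u : ℤ) + x = (w : ℤ) * (p : ℤ) ^ n + (((R - k) : ℕ) : ℤ) := by
              rw [hRkZ]
              linear_combination huZ - ((p : ℤ) ^ n) * hwZ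
            exact_mod_cast hZv
          rw [lucas_pow p hp F n (rn + sn - 2 * t) u, if_neg, mul_zero]
          rintro ⟨V, hV⟩
          have hVc : p ^ n * V = V * p ^ n := Nat.mul_comm _ _
          have h2 : x + V * p ^ n = w * p ^ n + (R - k) := by omega
          apply hmod
          rw [← Nat.add_mul_mod_self_right x V (p ^ n), h2, Nat.mul_add_mod',
            Nat.mod_eq_of_lt (by omega)]
        · rw [mul_zero]
  · -- off the antidiagonal : everything vanishes
    rw [Finset.sum_eq_zero, Finset.sum_eq_zero, mul_zero]
    · intro i hi
      split_ifs with hcond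
      · exfalso
        obtain ⟨c1, c2, -⟩ := hcond
        exact hdiag (by linear_combination c1 + c2)
      · rw [mul_zero]
    · intro q _
      split_ifs with hcond
      · exfalso
        obtain ⟨-, -, c3⟩ := hcond
        rw [hNNZ] at c3
        exact hdiag (by linear_combination c3)
      · rw [mul_zero]
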